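/- In a game where one player may pass and positions are determined up to equivalence by their restriction to finite sets (a compactness/locality hypothesis), only finite game values arise: if every position q of finite game value k has a finite set S(q) of coordinates such that any position agreeing with q on S(q) has value at most k, and the passing player can always pass, then no position has game value ω. -/
import Mathlib


/-- Abstract short-range zugzwang theorem. Positions are assignments `ι → X` of contents
to coordinates. `wval q k` means the White-to-move position `q` has game value `k`, and
`bval q α` means the Black-to-move position `q` has game value `α`; `move q` is the set of
positions Black can move to from `q` (Black may also pass, leaving `q` with White to move).
Hypotheses:
* `huniq`: game values of White-to-move positions are well-defined;
* `hloc` (locality): every White-to-move position of finite value `k` has a finite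
  coordinate set such that any position agreeing with it there has value `≤ k`;
* `hnotlim`: White-to-move positions never have value `ω` (their values are not limits);
* `hfin`: from any position, only finitely many Black moves alter a given finite
  coordinate set;
* `hbval`: the value of a Black-to-move position is the supremum of the values of the
  positions reachable by a Black move or a pass, each of which has value `≤ α`.
Conclusion: no Black-to-move position has game value `ω`. -/
theorem no_black_position_of_value_omega {ι X : Type*}
    (wval bval : (ι → X) → Ordinal → Prop)
    (move : (ι → X) → Set (ι → X))
    (huniq : ∀ q α β, wval q α → wval q β → α = β)
    (hloc : ∀ q k, wval q k → k < Ordinal.omega0 →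
      ∃ S : Finset ι, ∀ q' : ι → X, (∀ i ∈ S, q' i = q i) → ∀ β, wval q' β → β ≤ k)
    (hnotlim : ∀ q α, wval q α → α ≠ Ordinal.omega0)
    (hfin : ∀ q : ι → X, ∀ S : Finset ι, {q' ∈ move q | ∃ i ∈ S, q' i ≠ q i}.Finite)
    (hbval : ∀ q α, bval q α →
      ∃ k : Ordinal, wval q k ∧ k ≤ α ∧
        (∀ q' ∈ move q, ∃ β ≤ α, wval q' β) ∧
        (∀ γ : Ordinal, γ < α → γ < k ∨ ∃ q' ∈ move q, ∃ β ≤ α, wval q' β ∧ γ < β)) :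
    ∀ q : ι → X, ¬ bval q Ordinal.omega0 := by
  intro q hq
  obtain ⟨k, hwk, hkle, hmoves, hsup⟩ := hbval q _ hq
  have hkom : k < Ordinal.omega0 := lt_of_le_of_ne hkle (hnotlim q k hwk)
  obtain ⟨S, hS⟩ := hloc q k hwk hkom
  have hF := hfin q S
  -- choose a value for each move
  classical
  let b : (ι → X) → Ordinal := fun q' =>
    if h : q' ∈ move q then (hmoves q' h).choose else 0
  have hb : ∀ q' ∈ move q, b q' ≤ Ordinal.omega0 ∧ wval q' (b q') := by
    intro q' h
    have := (hmoves q' h).choose_spec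
    simpa [b, dif_pos h] using this
  set M : Ordinal := k ⊔ hF.toFinset.sup b with hM
  have hMom : M < Ordinal.omega0 := by
    rw [hM, sup_lt_iff]
    refine ⟨hkom, ?_⟩
    rw [Finset.sup_lt_iff (by exact Ordinal.omega0_pos)]
    intro q' hq'
    rw [Set.Finite.mem_toFinset] at hq'
    obtain ⟨h1, h2⟩ := hq'
    obtain ⟨hle, hw⟩ := hb q' h1
    exact lt_of_le_of_ne hle (hnotlim q' _ hw)
  rcases hsup M hMom with hlt | ⟨q', hq', β, hβle, hw, hMβ⟩
  · exact absurd hlt (not_lt.2 (le_sup_left))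
  · by_cases hS' : ∀ i ∈ S, q' i = q i
    · have := hS q' hS' β hw
      exact absurd hMβ (not_lt.2 (this.trans le_sup_left))
    · push_neg at hS'
      have hmem : q' ∈ hF.toFinset := by
        rw [Set.Finite.mem_toFinset]; exact ⟨hq', hS'⟩
      obtain ⟨hle, hw'⟩ := hb q' hq'
      have : β = b q' := huniq q' β _ hw hw'
      have : β ≤ M := this ▸ le_sup_of_le_right (Finset.le_sup hmem)
      exact absurd hMβ (not_lt.2 this)
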